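/- Let R be a commutative ring, Q a minimal prime ideal of R (a prime ideal minimal over the zero ideal), S = R \ Q, and P a proper ideal of R. Then P is an S-ideal of R if and only if P is a Q-primary ideal of R, i.e., P is a primary ideal with √P = Q. -/

import Mathlib

/-- A subset `S` of a commutative ring is multiplicatively closed:
nonempty and closed under multiplication. -/
def MulClosed {R : Type*} [CommRing R] (S : Set R) : Prop :=
  S.Nonempty ∧ ∀ x ∈ S, ∀ y ∈ S, x * y ∈ S

/-- A proper ideal `P` is an `S`-ideal if `x * y ∈ P` and `x ∈ S` imply `y ∈ P`. -/
def SIdeal {R : Type*} [CommRing R] (S : Set R) (P : Ideal R) : Prop :=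
  P ≠ ⊤ ∧ ∀ x y : R, x * y ∈ P → x ∈ S → y ∈ P

/-- If `Q` is a minimal prime and `q ∈ Q`, some multiple of a power of `q`
by an element outside `Q` is zero. -/
lemma aux_min {R : Type*} [CommRing R] {Q : Ideal R} [Q.IsPrime]
    (hQ : Q ∈ minimalPrimes R) {q : R} (hq : q ∈ Q) :
    ∃ s ∉ Q, ∃ n : ℕ, s * q ^ n = 0 := by
  set L := Localization Q.primeCompl
  have hmem : algebraMap R L q ∈ IsLocalRing.maximalIdeal L :=
    (IsLocalization.AtPrime.to_map_mem_maximal_iff L Q q).mpr hq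
  obtain ⟨n, hn⟩ :=
    (haveI := Ring.KrullDimLE.of_isLocalization Q hQ L
     Ring.KrullDimLE.isNilpotent_iff_mem_maximalIdeal.mpr hmem)
  rw [← map_pow] at hn
  obtain ⟨⟨s, hs⟩, hsz⟩ := (IsLocalization.map_eq_zero_iff Q.primeCompl L (q ^ n)).mp hn
  exact ⟨s, hs, n, hsz⟩

theorem stmt_10 {R : Type*} [CommRing R] (Q P : Ideal R)
    (hQ : Q ∈ minimalPrimes R) (hP : P ≠ ⊤) :
    SIdeal ((Q : Set R)ᶜ) P ↔ (P.IsPrimary ∧ P.radical = Q) := by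
  have hQp : Q.IsPrime := hQ.1.1
  constructor
  · rintro ⟨-, hS⟩
    have hPQ : P ≤ Q := by
      intro a ha
      by_contra haQ
      exact hP (Ideal.eq_top_iff_one P |>.mpr (hS a 1 (by simpa using ha) haQ))
    have hrad : P.radical = Q := by
      apply le_antisymm
      · have : P.radical ≤ Q.radical := Ideal.radical_mono hPQ
        rwa [hQp.radical] at this
      · intro q hq
        obtain ⟨s, hs, n, hsn⟩ := aux_min hQ hq
        have : q ^ n ∈ P := hS s (q ^ n) (by rw [hsn]; exact P.zero_mem) hs
        exact ⟨n, this⟩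
    refine ⟨Ideal.isPrimary_iff.mpr ⟨hP, ?_⟩, hrad⟩
    intro x y hxy
    by_cases hy : y ∈ Q
    · right; rw [hrad]; exact hy
    · left; exact hS y x (mul_comm x y ▸ hxy) hy
  · rintro ⟨hprim, hrad⟩
    refine ⟨hP, fun x y hxy hx => ?_⟩
    rcases (Ideal.isPrimary_iff.mp hprim).2 (mul_comm x y ▸ hxy) with h | h
    · exact h
    · rw [hrad] at h; exact absurd h hx
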